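/- Let F : C → B and G : D → B be Galois coverings of k-categories, and let (H,J) be a morphism from F to G. Then for every k-linear functor H' : C → D with G ∘ H' = J ∘ F, there exists a unique g ∈ Aut₁G with H' = g ∘ H. In other words, the map g ↦ g ∘ H is a bijection from Aut₁G onto the set of k-linear functors H' : C → D satisfying G ∘ H' = J ∘ F. -/

import Mathlib

open CategoryTheory

universe w v u

section CoveringDefs

variable (k : Type w) [CommRing k]

/-- A functor between `k`-linear categories is `k`-linear:
it is additive and commutes with the scalar action on morphisms. -/
def IsLinearFunctor {C : Type u} [Category.{v} C] [Preadditive C] [CategoryTheory.Linear k C]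
    {B : Type u} [Category.{v} B] [Preadditive B] [CategoryTheory.Linear k B]
    (F : C ⥤ B) : Prop :=
  (∀ (x y : C) (f g : x ⟶ y), F.map (f + g) = F.map f + F.map g) ∧
  (∀ (x y : C) (r : k) (f : x ⟶ y), F.map (r • f) = r • F.map f)

variable {C : Type u} [Category.{v} C] [Preadditive C] [CategoryTheory.Linear k C]
variable {B : Type u} [Category.{v} B] [Preadditive B] [CategoryTheory.Linear k B]

/-- The canonical map `⊕_{y ∈ F⁻¹(c)} C(x,y) →+ B(F(x),c)` induced by `F`
on the source star. -/
noncomputable def starOutHom (F : C ⥤ B) (hF : IsLinearFunctor k F) (x : C) (c : B) :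
    (DirectSum {y : C // F.obj y = c} (fun y => (x ⟶ y.1))) →+ (F.obj x ⟶ c) := by
  classical
  exact DirectSum.toAddMonoid fun y =>
    AddMonoidHom.mk' (fun f => F.map f ≫ eqToHom y.2)
      (fun f g => by try simp only []
                     rw [hF.1 _ _ f g, Preadditive.add_comp])

/-- The canonical map `⊕_{y ∈ F⁻¹(c)} C(y,x) →+ B(c,F(x))` induced by `F`
on the target star. -/
noncomputable def starInHom (F : C ⥤ B) (hF : IsLinearFunctor k F) (x : C) (c : B) :
    (DirectSum {y : C // F.obj y = c} (fun y => (y.1 ⟶ x))) →+ (c ⟶ F.obj x) := by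
  classical
  exact DirectSum.toAddMonoid fun y =>
    AddMonoidHom.mk' (fun f => eqToHom y.2.symm ≫ F.map f)
      (fun f g => by try simp only []
                     rw [hF.1 _ _ f g, Preadditive.comp_add])

/-- `F : C ⥤ B` is a covering of `k`-categories: it is a `k`-linear functor,
surjective on objects, inducing bijections on all source and target stars. -/
def IsCovering (F : C ⥤ B) : Prop :=
  ∃ hF : IsLinearFunctor k F,
    Function.Surjective F.obj ∧
    (∀ (x : C) (c : B), Function.Bijective (starOutHom k F hF x c)) ∧
    (∀ (x : C) (c : B), Function.Bijective (starInHom k F hF x c))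

end CoveringDefs

/-- A `k`-category is connected if the equivalence relation generated by
"there is a nonzero morphism from `x` to `y`" relates any two objects. -/
def IsConnectedKCat (C : Type u) [Category.{v} C] [Preadditive C] : Prop :=
  ∀ x y : C, Relation.EqvGen (fun a b : C => ∃ f : a ⟶ b, f ≠ 0) x y

section GaloisDefs

variable (k : Type w) [CommRing k]
variable {C : Type u} [Category.{v} C] [Preadditive C] [CategoryTheory.Linear k C]
variable {B : Type u} [Category.{v} B] [Preadditive B] [CategoryTheory.Linear k B]
variable {D : Type u} [Category.{v} D] [Preadditive D] [CategoryTheory.Linear k D]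

/-- `H` belongs to `Aut₁ F`: it is an invertible `k`-linear endofunctor with `F ∘ H = F`. -/
def MemAut1 (F : C ⥤ B) (H : C ⥤ C) : Prop :=
  IsLinearFunctor k H ∧
  (∃ Hinv : C ⥤ C, H ⋙ Hinv = 𝟭 C ∧ Hinv ⋙ H = 𝟭 C) ∧
  H ⋙ F = F

/-- A covering is Galois if its source is connected and `Aut₁ F` acts transitively
on some fibre. -/
def IsGaloisCovering (F : C ⥤ B) : Prop :=
  IsCovering k F ∧ IsConnectedKCat C ∧
  ∃ b₀ : B, ∀ x y : C, F.obj x = b₀ → F.obj y = b₀ →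
    ∃ H : C ⥤ C, MemAut1 k F H ∧ H.obj x = y

/-- A morphism `(H, J)` of coverings from `F : C ⥤ B` to `G : D ⥤ B`:
`H` and `J` are `k`-linear, `J` is an isomorphism which is the identity on objects,
and `G ∘ H = J ∘ F`. -/
def IsCoveringMorphism (F : C ⥤ B) (G : D ⥤ B) (H : C ⥤ D) (J : B ⥤ B) : Prop :=
  IsLinearFunctor k H ∧ IsLinearFunctor k J ∧
  (∃ Jinv : B ⥤ B, J ⋙ Jinv = 𝟭 B ∧ Jinv ⋙ J = 𝟭 B) ∧
  (∀ b : B, J.obj b = b) ∧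
  H ⋙ G = F ⋙ J

end GaloisDefs

/-- A universal covering: a Galois covering `U` such that for every Galois covering
`F : C ⥤ B` and every pair of objects `u₀`, `c₀` above the same object of `B`,
there is a unique `k`-linear functor `H` with `F ∘ H = U` and `H u₀ = c₀`. -/
def IsUniversalCovering (k : Type w) [CommRing k]
    {U' : Type u} [Category.{v} U'] [Preadditive U'] [CategoryTheory.Linear k U']
    {B : Type u} [Category.{v} B] [Preadditive B] [CategoryTheory.Linear k B]
    (U : U' ⥤ B) : Prop :=
  IsGaloisCovering k U ∧
  ∀ (C : Type u) [Category.{v} C] [Preadditive C] [CategoryTheory.Linear k C]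
    (F : C ⥤ B), IsGaloisCovering k F →
    ∀ (u₀ : U') (c₀ : C), U.obj u₀ = F.obj c₀ →
      ∃! H : U' ⥤ C, IsLinearFunctor k H ∧ H ⋙ F = U ∧ H.obj u₀ = c₀

/-- Given a functor `F : C ⥤ B`, a choice `x` of objects of `C` above each object of `B`,
and an endofunctor `H` of `C`, the subset `Z_H(c,b) = F(C(x_b, H x_c))` of `B(b,c)`. -/
def gradeSet {C : Type u} [Category.{v} C] {B : Type u} [Category.{v} B]
    (F : C ⥤ B) (x : B → C) (H : C ⥤ C) (b c : B) : Set (b ⟶ c) :=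
  {g | ∃ (h₁ : b = F.obj (x b)) (h₂ : F.obj (H.obj (x c)) = c)
        (f : x b ⟶ H.obj (x c)), g = eqToHom h₁ ≫ F.map f ≫ eqToHom h₂}

/-- The homogeneous component `Z_H(c,b)` as a `k`-submodule of `B(b,c)`. -/
noncomputable def gradeSubmodule (k : Type w) [CommRing k]
    {C : Type u} [Category.{v} C]
    {B : Type u} [Category.{v} B] [Preadditive B] [CategoryTheory.Linear k B]
    (F : C ⥤ B) (x : B → C) (H : C ⥤ C) (b c : B) : Submodule k (b ⟶ c) :=
  Submodule.span k (gradeSet F x H b c)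

section MyHelpers

open scoped Classical

variable {k : Type w} [CommRing k]
variable {E : Type u} [Category.{v} E] [Preadditive E] [CategoryTheory.Linear k E]
variable {D : Type u} [Category.{v} D] [Preadditive D] [CategoryTheory.Linear k D]
variable {B : Type u} [Category.{v} B] [Preadditive B] [CategoryTheory.Linear k B]

lemma linmap_zero {F : D ⥤ B} (hF : IsLinearFunctor k F) (x y : D) :
    F.map (0 : x ⟶ y) = 0 := by
  have h := hF.2 x y 0 0
  simpa using h

lemma starOutHom_of {F : D ⥤ B} (hF : IsLinearFunctor k F) (x : D) (c : B)
    (z : {z : D // F.obj z = c}) (f : x ⟶ z.1) :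
    starOutHom k F hF x c (DirectSum.of _ z f) = F.map f ≫ eqToHom z.2 := by
  simp [starOutHom, DirectSum.toAddMonoid_of]

lemma starInHom_of {F : D ⥤ B} (hF : IsLinearFunctor k F) (x : D) (c : B)
    (z : {z : D // F.obj z = c}) (f : z.1 ⟶ x) :
    starInHom k F hF x c (DirectSum.of _ z f) = eqToHom z.2.symm ≫ F.map f := by
  simp [starInHom, DirectSum.toAddMonoid_of]

lemma eqToHom_conj_ne_zero {a b a' b' : B} (p : a' = a) (q : b = b')
    {f : a ⟶ b} (hf : f ≠ 0) : eqToHom p ≫ f ≫ eqToHom q ≠ 0 := by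
  subst p; subst q; simpa using hf

lemma covering_map_ne_zero {G : D ⥤ B} (hG : IsCovering k G) {x y : D}
    {f : x ⟶ y} (hf : f ≠ 0) : G.map f ≠ 0 := by
  obtain ⟨hlin, -, hout, -⟩ := hG
  intro h0
  apply hf
  have hinj := (hout x (G.obj y)).1
  have h : DirectSum.of (fun z : {z : D // G.obj z = G.obj y} => (x ⟶ z.1)) ⟨y, rfl⟩ f
      = DirectSum.of (fun z : {z : D // G.obj z = G.obj y} => (x ⟶ z.1)) ⟨y, rfl⟩ 0 := by
    apply hinj
    rw [starOutHom_of, starOutHom_of, h0, linmap_zero hlin]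
  exact DirectSum.of_injective (β := fun z : {z : D // G.obj z = G.obj y} => (x ⟶ z.1)) _ h

lemma inv_map_injective {J Jinv : B ⥤ B} (h : J ⋙ Jinv = 𝟭 B) {a b : B} :
    Function.Injective (fun f : a ⟶ b => J.map f) := by
  intro s t hst
  have hs := Functor.congr_hom h s
  have ht := Functor.congr_hom h t
  simp only [Functor.comp_map, Functor.id_map] at hs ht
  have h2 : Jinv.map (J.map s) = Jinv.map (J.map t) := by
    simp only [] at hst; rw [hst]
  rw [hs, ht] at h2
  have h3 := congrArg (fun w => eqToHom (Functor.congr_obj h a).symm ≫ w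
      ≫ eqToHom (Functor.congr_obj h b)) h2
  simpa using h3

lemma unique_lift (G : D ⥤ B) (hG : IsCovering k G) (K K' : E ⥤ D)
    (hcomm : K ⋙ G = K' ⋙ G) (hconn : IsConnectedKCat E)
    (hnz : ∀ {x y : E} (f : x ⟶ y), f ≠ 0 → G.map (K.map f) ≠ 0)
    (e₀ : E) (h₀ : K.obj e₀ = K'.obj e₀) : K = K' := by
  obtain ⟨hlin, -, hout, hin⟩ := id hG
  have hob : ∀ a : E, G.obj (K.obj a) = G.obj (K'.obj a) := fun a => Functor.congr_obj hcomm a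
  have hmor : ∀ {a b : E} (f : a ⟶ b),
      G.map (K.map f) = eqToHom (hob a) ≫ G.map (K'.map f) ≫ eqToHom (hob b).symm := by
    intro a b f
    have h1 := Functor.congr_hom hcomm f
    simpa using h1
  have hKnz : ∀ {a b : E} {f : a ⟶ b}, f ≠ 0 → K.map f ≠ 0 := by
    intro a b f hf h0
    exact hnz f hf (by rw [h0, linmap_zero hlin])
  have fwd : ∀ {a b : E} (f : a ⟶ b), f ≠ 0 → K.obj a = K'.obj a → K.obj b = K'.obj b := by
    intro a b f hf ha
    have hinj := (hout (K.obj a) (G.obj (K.obj b))).1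
    have key : DirectSum.of (fun z : {z : D // G.obj z = G.obj (K.obj b)} => (K.obj a ⟶ z.1))
          ⟨K.obj b, rfl⟩ (K.map f)
        = DirectSum.of (fun z : {z : D // G.obj z = G.obj (K.obj b)} => (K.obj a ⟶ z.1))
            ⟨K'.obj b, (hob b).symm⟩ (eqToHom ha ≫ K'.map f) := by
      apply hinj
      rw [starOutHom_of, starOutHom_of]
      simp [hmor f, eqToHom_map]
    by_contra hne
    have hne' : (⟨K'.obj b, (hob b).symm⟩ : {z : D // G.obj z = G.obj (K.obj b)})
        ≠ ⟨K.obj b, rfl⟩ := by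
      intro h; exact hne (congrArg Subtype.val h).symm
    have h1 := congrArg (fun w : DirectSum {z : D // G.obj z = G.obj (K.obj b)}
        (fun z => (K.obj a ⟶ z.1)) => w ⟨K.obj b, rfl⟩) key
    simp only [DirectSum.of_eq_same, DirectSum.of_eq_of_ne _ _ _ hne'.symm] at h1
    exact hKnz hf h1
  have bwd : ∀ {a b : E} (f : a ⟶ b), f ≠ 0 → K.obj b = K'.obj b → K.obj a = K'.obj a := by
    intro a b f hf hb
    have hinj := (hin (K.obj b) (G.obj (K.obj a))).1
    have key : DirectSum.of (fun z : {z : D // G.obj z = G.obj (K.obj a)} => (z.1 ⟶ K.obj b))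
          ⟨K.obj a, rfl⟩ (K.map f)
        = DirectSum.of (fun z : {z : D // G.obj z = G.obj (K.obj a)} => (z.1 ⟶ K.obj b))
            ⟨K'.obj a, (hob a).symm⟩ (K'.map f ≫ eqToHom hb.symm) := by
      apply hinj
      rw [starInHom_of, starInHom_of]
      simp [hmor f, eqToHom_map]
    by_contra hne
    have hne' : (⟨K'.obj a, (hob a).symm⟩ : {z : D // G.obj z = G.obj (K.obj a)})
        ≠ ⟨K.obj a, rfl⟩ := by
      intro h; exact hne (congrArg Subtype.val h).symm
    have h1 := congrArg (fun w : DirectSum {z : D // G.obj z = G.obj (K.obj a)}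
        (fun z => (z.1 ⟶ K.obj b)) => w ⟨K.obj a, rfl⟩) key
    simp only [DirectSum.of_eq_same, DirectSum.of_eq_of_ne _ _ _ hne'.symm] at h1
    exact hKnz hf h1
  have hobj : ∀ x : E, K.obj x = K'.obj x := by
    have step : ∀ a b : E, Relation.EqvGen (fun a b : E => ∃ f : a ⟶ b, f ≠ 0) a b →
        (K.obj a = K'.obj a ↔ K.obj b = K'.obj b) := by
      intro a b h
      induction h with
      | rel a b hab => obtain ⟨f, hf⟩ := hab; exact ⟨fwd f hf, bwd f hf⟩
      | refl a => exact Iff.rfl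
      | symm a b _ ih => exact ih.symm
      | trans a b c _ _ ih1 ih2 => exact ih1.trans ih2
    intro x
    exact (step e₀ x (hconn e₀ x)).mp h₀
  refine CategoryTheory.Functor.ext hobj ?_
  intro a b f
  have hinj := (hout (K.obj a) (G.obj (K.obj b))).1
  have key : DirectSum.of (fun z : {z : D // G.obj z = G.obj (K.obj b)} => (K.obj a ⟶ z.1))
        ⟨K.obj b, rfl⟩ (K.map f)
      = DirectSum.of (fun z : {z : D // G.obj z = G.obj (K.obj b)} => (K.obj a ⟶ z.1))
          ⟨K.obj b, rfl⟩ (eqToHom (hobj a) ≫ K'.map f ≫ eqToHom (hobj b).symm) := by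
    apply hinj
    rw [starOutHom_of, starOutHom_of]
    simp [hmor f, eqToHom_map]
  exact DirectSum.of_injective (β := fun z : {z : D // G.obj z = G.obj (K.obj b)} => (K.obj a ⟶ z.1)) _ key

end MyHelpers

theorem galois_morphisms_torsor_under_aut (k : Type w) [CommRing k]
    {C : Type u} [Category.{v} C] [Preadditive C] [CategoryTheory.Linear k C]
    {B : Type u} [Category.{v} B] [Preadditive B] [CategoryTheory.Linear k B]
    {D : Type u} [Category.{v} D] [Preadditive D] [CategoryTheory.Linear k D]
    (F : C ⥤ B) (G : D ⥤ B) (hF : IsGaloisCovering k F) (hG : IsGaloisCovering k G)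
    (H : C ⥤ D) (J : B ⥤ B) (hHJ : IsCoveringMorphism k F G H J) :
    ∀ H' : C ⥤ D, IsLinearFunctor k H' → H' ⋙ G = F ⋙ J →
      ∃! g : D ⥤ D, MemAut1 k G g ∧ H ⋙ g = H' := by

  classical
  intro H' hH'lin hH'comm
  obtain ⟨hGcov, hDconn, b₀, htrans⟩ := hG
  obtain ⟨hFcov, hCconn, -⟩ := hF
  obtain ⟨hHlin, hJlin, ⟨Jinv, hJ1, hJ2⟩, hJobj, hHG⟩ := hHJ
  obtain ⟨hFlin, hFsurj, -, -⟩ := id hFcov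
  obtain ⟨x₀, hx₀⟩ := hFsurj b₀
  have hH0 : G.obj (H.obj x₀) = b₀ := by
    have h1 := Functor.congr_obj hHG x₀
    simp only [Functor.comp_obj] at h1
    rw [h1, hJobj, hx₀]
  have hH'0 : G.obj (H'.obj x₀) = b₀ := by
    have h1 := Functor.congr_obj hH'comm x₀
    simp only [Functor.comp_obj] at h1
    rw [h1, hJobj, hx₀]
  obtain ⟨g, hgmem, hgobj⟩ := htrans (H.obj x₀) (H'.obj x₀) hH0 hH'0
  have hg3 : g ⋙ G = G := hgmem.2.2
  have hGF : ∀ {x y : C} (f : x ⟶ y), f ≠ 0 → G.map ((H ⋙ g).map f) ≠ 0 := by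
    intro x y f hf
    have hFf : F.map f ≠ 0 := covering_map_ne_zero hFcov hf
    have hJFf : J.map (F.map f) ≠ 0 := by
      intro h0
      apply hFf
      apply inv_map_injective hJ1
      show J.map (F.map f) = J.map 0
      rw [h0, linmap_zero hJlin]
    have h1 : G.map (H.map f) ≠ 0 := by
      have hc := Functor.congr_hom hHG f
      simp only [Functor.comp_map] at hc
      rw [hc]
      exact eqToHom_conj_ne_zero _ _ hJFf
    have hc := Functor.congr_hom hg3 (H.map f)
    simp only [Functor.comp_map] at hc
    simp only [Functor.comp_map]
    rw [hc]
    exact eqToHom_conj_ne_zero _ _ h1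
  have hKcomm : (H ⋙ g) ⋙ G = H' ⋙ G := by
    rw [Functor.assoc, hg3, hHG, hH'comm]
  have hmain : H ⋙ g = H' :=
    unique_lift G hGcov (H ⋙ g) H' hKcomm hCconn hGF x₀ hgobj
  refine ⟨g, ⟨hgmem, hmain⟩, ?_⟩
  rintro g' ⟨hg'mem, hg'comp⟩
  have hg'3 : g' ⋙ G = G := hg'mem.2.2
  have hnz' : ∀ {x y : D} (f : x ⟶ y), f ≠ 0 → G.map (g'.map f) ≠ 0 := by
    intro x y f hf
    have hc := Functor.congr_hom hg'3 f
    simp only [Functor.comp_map] at hc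
    rw [hc]
    exact eqToHom_conj_ne_zero _ _ (covering_map_ne_zero hGcov hf)
  have h₀ : g'.obj (H.obj x₀) = g.obj (H.obj x₀) := by
    have h1 := Functor.congr_obj hg'comp x₀
    have h2 := Functor.congr_obj hmain x₀
    simp only [Functor.comp_obj] at h1 h2
    rw [h1, ← h2]
  exact unique_lift G hGcov g' g (hg'3.trans hg3.symm) hDconn hnz' (H.obj x₀) h₀
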